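/- Let A be a Hermitian commutative unital complex *-algebra, let H be a complex Hilbert space, let D be a dense ℂ-subspace of H, and let π be a representation of A on D. Let c ∈ A and write c = a + i·b with a := (c + star c)/2 and b := (c - star c)/(2i), which are selfadjoint. Then T_a and T_b are essentially self-adjoint, T_c is closable, and the closure of T_c equals the sum of the closure of T_a and i times the closure of T_b (the domain of the closure of T_c is the intersection of the domains of the closures of T_a and T_b, and on this intersection (closure T_c) x = (closure T_a) x + i • (closure T_b) x). -/

import Mathlib

open scoped InnerProductSpace
open Filter Topology

set_option linter.unusedSectionVars false

noncomputable section Stmt4Aux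

variable {A : Type*} [CommRing A] [Algebra ℂ A] [StarRing A] [StarModule ℂ A]
variable {H : Type*} [NormedAddCommGroup H] [InnerProductSpace ℂ H] [CompleteSpace H]
variable {D : Submodule ℂ H}

def TT (π : A →ₐ[ℂ] (D →ₗ[ℂ] D)) (s : A) : H →ₗ.[ℂ] H := ⟨D, D.subtype.comp (π s)⟩

variable (π : A →ₐ[ℂ] (D →ₗ[ℂ] D))

lemma TT_apply {s : A} (u : (TT π s).domain) : TT π s u = ((π s ⟨u.1, u.2⟩ : D) : H) := rfl

lemma TT_graph_mem {s : A} {p : H × H} :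
    p ∈ (TT π s).graph ↔ ∃ u : D, (u : H) = p.1 ∧ ((π s u : D) : H) = p.2 := by
  rw [LinearPMap.mem_graph_iff]; rfl

lemma mem_closure_TT_graph' {s : A} {x y : H} :
    (x, y) ∈ (TT π s).graph.topologicalClosure ↔
      ∃ u : ℕ → D, Tendsto (fun n => ((u n : H))) atTop (𝓝 x) ∧
        Tendsto (fun n => ((π s (u n) : D) : H)) atTop (𝓝 y) := by
  rw [← SetLike.mem_coe, Submodule.topologicalClosure_coe, mem_closure_iff_seq_limit]
  constructor
  · rintro ⟨p, hp, hlim⟩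
    choose u hu1 hu2 using fun n => (TT_graph_mem π).1 (hp n)
    exact ⟨u, by simpa [Function.comp_def, hu1] using (continuous_fst.tendsto (x, y)).comp hlim,
      by simpa [Function.comp_def, hu2] using (continuous_snd.tendsto (x, y)).comp hlim⟩
  · rintro ⟨u, h1, h2⟩
    exact ⟨fun n => ((u n : H), ((π s (u n) : D) : H)),
      fun n => (TT_graph_mem π).2 ⟨u n, rfl, rfl⟩, h1.prodMk_nhds h2⟩

variable (hD : Dense (D : Set H))
variable (hπ : ∀ (d : A) (x y : D),
      ⟪((π d x : D) : H), (y : H)⟫_ℂ = ⟪(x : H), ((π (star d) y : D) : H)⟫_ℂ)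

include hD hπ

/-- every `TT π s` is closable -/
lemma TT_isClosable (s : A) : (TT π s).IsClosable := by
  refine ⟨((TT π s).graph.topologicalClosure).toLinearPMap, ?_⟩
  rw [Submodule.toLinearPMap_graph_eq]
  rintro ⟨x, y⟩ hxy rfl
  obtain ⟨u, hu1, hu2⟩ := (mem_closure_TT_graph' π).1 hxy
  refine hD.eq_zero_of_inner_left ℂ fun v' hv' => ?_
  obtain ⟨v, rfl⟩ : ∃ v : D, (v : H) = v' := ⟨⟨v', hv'⟩, rfl⟩
  have h1 : Tendsto (fun n => ⟪((π s (u n) : D) : H), (v : H)⟫_ℂ) atTop (𝓝 ⟪y, (v : H)⟫_ℂ) :=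
    ((continuous_id.inner continuous_const).tendsto y).comp hu2
  have h2 : Tendsto (fun n => ⟪((u n : D) : H), ((π (star s) v : D) : H)⟫_ℂ) atTop
      (𝓝 ⟪(0 : H), ((π (star s) v : D) : H)⟫_ℂ) :=
    ((continuous_id.inner continuous_const).tendsto 0).comp hu1
  have : (fun n => ⟪((π s (u n) : D) : H), (v : H)⟫_ℂ)
      = fun n => ⟪((u n : D) : H), ((π (star s) v : D) : H)⟫_ℂ := funext fun n => hπ s (u n) v
  rw [this] at h1
  have := tendsto_nhds_unique h1 h2
  simpa using this

/-- the graph of the closure, by sequences -/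
lemma mem_TT_closure_graph {s : A} {x y : H} :
    (x, y) ∈ (TT π s).closure.graph ↔
      ∃ u : ℕ → D, Tendsto (fun n => ((u n : H))) atTop (𝓝 x) ∧
        Tendsto (fun n => ((π s (u n) : D) : H)) atTop (𝓝 y) := by
  rw [← (TT_isClosable π hD hπ s).graph_closure_eq_closure_graph, mem_closure_TT_graph']


omit hD hπ in
lemma graph_fst {f : H →ₗ.[ℂ] H} {x y : H} (h : (x, y) ∈ f.graph) : x ∈ f.domain := by
  rcases (LinearPMap.mem_graph_iff f).1 h with ⟨u, h1, _⟩
  have h1' : (u : H) = x := h1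
  exact h1' ▸ u.2

omit hD hπ in
lemma graph_apply {f : H →ₗ.[ℂ] H} {x y : H} (h : (x, y) ∈ f.graph) (hx : x ∈ f.domain) :
    f ⟨x, hx⟩ = y := by
  rcases (LinearPMap.mem_graph_iff f).1 h with ⟨u, h1, h2⟩
  have : (⟨x, hx⟩ : f.domain) = u := Subtype.ext h1.symm
  rw [this, h2]

lemma TT_mem_closure_graph_of_D {s : A} (u : D) :
    (((u : H)), ((π s u : D) : H)) ∈ (TT π s).closure.graph := by
  rw [mem_TT_closure_graph π hD hπ]
  exact ⟨fun _ => u, tendsto_const_nhds, tendsto_const_nhds⟩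

omit hπ in
lemma TT_closure_dense_domain (s : A) :
    Dense (((TT π s).closure.domain : Set H)) := by
  apply hD.mono
  intro x hx
  exact (TT π s).le_closure.1 hx

omit hD in
lemma TT_symm {s : A} (hs : star s = s) (u v : D) :
    ⟪((π s u : D) : H), (v : H)⟫_ℂ = ⟪(u : H), ((π s v : D) : H)⟫_ℂ := by
  have := hπ s u v; rwa [hs] at this

omit hD in
lemma TT_inner_self_real {s : A} (hs : star s = s) (u : D) :
    (⟪((π s u : D) : H), (u : H)⟫_ℂ).im = 0 := by
  have h1 : (starRingEnd ℂ) ⟪((π s u : D) : H), (u : H)⟫_ℂ = ⟪((π s u : D) : H), (u : H)⟫_ℂ := by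
    rw [inner_conj_symm, TT_symm π hπ hs]
  exact Complex.conj_eq_iff_im.1 h1

omit hD in
/-- Key norm identity. -/
lemma TT_norm_sq_sub_smul {s : A} (hs : star s = s) (n : ℝ) (u : D) :
    ‖((π s u : D) : H) - ((n : ℂ) * Complex.I) • (u : H)‖ ^ 2
      = ‖((π s u : D) : H)‖ ^ 2 + n ^ 2 * ‖(u : H)‖ ^ 2 := by
  rw [@norm_sub_sq ℂ]
  have him := TT_inner_self_real π hπ hs u
  have hre : RCLike.re ⟪((π s u : D) : H), ((n : ℂ) * Complex.I) • (u : H)⟫_ℂ = 0 := by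
    rw [inner_smul_right]
    simp [Complex.mul_re, Complex.mul_im, him]
  rw [hre, norm_smul]
  have : ‖(n : ℂ) * Complex.I‖ = |n| := by simp
  rw [this]
  rw [mul_pow, sq_abs]
  ring

section Resolvent

omit hπ

/-- A sequence in `D` converging to an arbitrary `x : H`. -/
lemma exists_seq_tendsto (x : H) :
    ∃ u : ℕ → D, Tendsto (fun n => ((u n : H))) atTop (𝓝 x) := by
  have hx : x ∈ closure (D : Set H) := by rw [hD.closure_eq]; trivial
  obtain ⟨p, hp, hlim⟩ := mem_closure_iff_seq_limit.1 hx
  exact ⟨fun n => ⟨p n, hp n⟩, hlim⟩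

variable {r : A} {C : ℝ}

/-- The bounded extension of `π r` when `π r` is bounded on `D`. -/
def Rmap (hbd : ∀ u : D, ‖((π r u : D) : H)‖ ≤ C * ‖(u : H)‖) : H →L[ℂ] H :=
  have _ := hD
  (LinearMap.mkContinuous
    ((D.subtype.comp (π r)) : D →ₗ[ℂ] H) C (fun u => hbd u)).extend
    D.subtypeL

variable (hbd : ∀ u : D, ‖((π r u : D) : H)‖ ≤ C * ‖(u : H)‖)

lemma Rmap_apply (u : D) : Rmap π hD hbd (u : H) = ((π r u : D) : H) :=
  ContinuousLinearMap.extend_eq _ hD.denseRange_val isUniformEmbedding_subtype_val.isUniformInducing _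

lemma Rmap_norm_le (x : H) : ‖Rmap π hD hbd x‖ ≤ C * ‖x‖ := by
  obtain ⟨u, hu⟩ := exists_seq_tendsto hD x
  have h1 : Tendsto (fun n => ‖Rmap π hD hbd ((u n : H))‖) atTop (𝓝 ‖Rmap π hD hbd x‖) :=
    ((Rmap π hD hbd).continuous.norm.tendsto x).comp hu
  have h2 : Tendsto (fun n => C * ‖((u n : H))‖) atTop (𝓝 (C * ‖x‖)) :=
    (continuous_const.mul continuous_norm).tendsto x |>.comp hu
  refine le_of_tendsto_of_tendsto' h1 h2 fun n => ?_
  rw [Rmap_apply]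
  exact hbd (u n)

/-- The extensions of `π r₁` and `π r₂` commute. -/
lemma Rmap_comm {r₂ : A} {C₂ : ℝ} (hbd₂ : ∀ u : D, ‖((π r₂ u : D) : H)‖ ≤ C₂ * ‖(u : H)‖)
    (x : H) : Rmap π hD hbd (Rmap π hD hbd₂ x) = Rmap π hD hbd₂ (Rmap π hD hbd x) := by
  obtain ⟨u, hu⟩ := exists_seq_tendsto hD x
  have key : ∀ n, Rmap π hD hbd (Rmap π hD hbd₂ ((u n : H)))
      = Rmap π hD hbd₂ (Rmap π hD hbd ((u n : H))) := by
    intro n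
    rw [Rmap_apply, Rmap_apply, Rmap_apply, Rmap_apply]
    have : π r (π r₂ (u n)) = π r₂ (π r (u n)) := by
      rw [← Module.End.mul_apply, ← Module.End.mul_apply, ← map_mul, ← map_mul, mul_comm]
    rw [this]
  have h1 : Tendsto (fun n => Rmap π hD hbd (Rmap π hD hbd₂ ((u n : H)))) atTop
      (𝓝 (Rmap π hD hbd (Rmap π hD hbd₂ x))) :=
    (((Rmap π hD hbd).continuous.comp (Rmap π hD hbd₂).continuous).tendsto x).comp hu
  have h2 : Tendsto (fun n => Rmap π hD hbd₂ (Rmap π hD hbd ((u n : H)))) atTop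
      (𝓝 (Rmap π hD hbd₂ (Rmap π hD hbd x))) :=
    (((Rmap π hD hbd₂).continuous.comp (Rmap π hD hbd).continuous).tendsto x).comp hu
  rw [funext key] at h1
  exact tendsto_nhds_unique h1 h2

variable {s : A} {μ : ℂ} (hinv : (s - algebraMap ℂ A μ) * r = 1)

include hπ hinv

/-- `R` maps into the domain of the closure, with `(T̄ - μ) R = 1`. -/
lemma Rmap_mem_closure_graph (x : H) :
    (Rmap π hD hbd x, x + μ • Rmap π hD hbd x) ∈ (TT π s).closure.graph := by
  obtain ⟨u, hu⟩ := exists_seq_tendsto hD x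
  rw [mem_TT_closure_graph π hD hπ]
  refine ⟨fun n => π r (u n), ?_, ?_⟩
  · have h0 := ((Rmap π hD hbd).continuous.tendsto x).comp hu
    refine Tendsto.congr ?_ h0
    intro n
    simp [Function.comp, Rmap_apply]
  · have hsr : ∀ n, (π s) ((π r) (u n)) = u n + μ • (π r) (u n) := by
      intro n
      have h1 : s * r = 1 + algebraMap ℂ A μ * r := by
        rw [← hinv]; ring
      have := congrArg (fun t => π t (u n)) h1
      simpa [map_mul, map_add, Algebra.algebraMap_eq_smul_one, map_smul,
        Module.End.mul_apply] using this
    have h2 : Tendsto (fun n => ((u n : H)) + μ • (Rmap π hD hbd ((u n : H)))) atTop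
        (𝓝 (x + μ • Rmap π hD hbd x)) := by
      refine hu.add (Tendsto.const_smul ?_ μ)
      exact ((Rmap π hD hbd).continuous.tendsto x).comp hu
    refine h2.congr fun n => ?_
    rw [Rmap_apply]
    have := congrArg (fun w : D => (w : H)) (hsr n)
    simpa using this.symm

/-- `R (y - μ x) = x` whenever `(x, y)` is in the closure graph: `R (T̄ - μ) = 1`. -/
lemma Rmap_left_inv {x y : H} (hxy : (x, y) ∈ (TT π s).closure.graph) :
    Rmap π hD hbd (y - μ • x) = x := by
  obtain ⟨u, hu1, hu2⟩ := (mem_TT_closure_graph π hD hπ).1 hxy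
  have key : ∀ n, Rmap π hD hbd (((π s (u n) : D) : H) - μ • ((u n : H))) = ((u n : H)) := by
    intro n
    have hcoe : ((π s (u n) : D) : H) - μ • ((u n : H))
        = (((π s (u n) - μ • (u n) : D) : H)) := by
      push_cast [Submodule.coe_smul]
      ring_nf
    rw [hcoe, Rmap_apply]
    have hrs : r * (s - algebraMap ℂ A μ) = 1 := by rw [mul_comm]; exact hinv
    have := congrArg (fun t => π t (u n)) hrs
    simp only [map_mul, map_sub, Module.End.mul_apply, map_one, Module.End.one_apply] at this
    have h' : π r (π s (u n) - μ • u n) = u n := by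
      have hmu : π (algebraMap ℂ A μ) (u n) = μ • u n := by
        simp [Algebra.algebraMap_eq_smul_one]
      rw [map_sub, ← hmu]
      calc π r (π s (u n)) - π r (π (algebraMap ℂ A μ) (u n))
          = π r (π s (u n) - π (algebraMap ℂ A μ) (u n)) := by rw [map_sub]
        _ = u n := by
            have := congrArg (fun t => π t (u n)) hrs
            simpa [map_mul, Module.End.mul_apply, map_sub] using this
      
    exact congrArg _ h'
  have h1 : Tendsto (fun n => Rmap π hD hbd (((π s (u n) : D) : H) - μ • ((u n : H)))) atTop
      (𝓝 (Rmap π hD hbd (y - μ • x))) := by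
    refine ((Rmap π hD hbd).continuous.tendsto _).comp ?_
    exact hu2.sub (hu1.const_smul μ)
  rw [funext key] at h1
  exact tendsto_nhds_unique h1 hu1

end Resolvent

section ExistsResolvent

include hπ

/-- Existence of a bounded resolvent at `n·i` for selfadjoint `s` in a Hermitian algebra. -/
lemma exists_resolvent (hHerm : ∀ a : A, star a = a → ∀ z ∈ spectrum ℂ a, z.im = 0)
    {s : A} (hs : star s = s) {n : ℝ} (hn : n ≠ 0) :
    ∃ r : A, (s - algebraMap ℂ A ((n : ℂ) * Complex.I)) * r = 1 ∧
      ∀ u : D, ‖((π r u : D) : H)‖ ≤ |n|⁻¹ * ‖(u : H)‖ := by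
  have hmem : ((n : ℂ) * Complex.I) ∉ spectrum ℂ s := by
    intro hmem
    have := hHerm s hs _ hmem
    simp only [Complex.mul_im, Complex.ofReal_re, Complex.I_im, Complex.ofReal_im,
      Complex.I_re, mul_one, mul_zero, add_zero] at this
    exact hn this
  have hunit : IsUnit (s - algebraMap ℂ A ((n : ℂ) * Complex.I)) := by
    have := spectrum.notMem_iff.mp hmem
    simpa using this.neg
  obtain ⟨r, hr⟩ := hunit.exists_right_inv
  refine ⟨r, hr, fun u => ?_⟩
  set v := π r u with hv
  have hvald : π s v - ((n : ℂ) * Complex.I) • v = u := by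
    have := congrArg (fun t => π t u) hr
    simp only [map_mul, map_sub, Module.End.mul_apply, map_one, AlgHom.commutes,
      Module.algebraMap_end_apply, LinearMap.sub_apply, LinearMap.smul_apply,
      Module.End.one_apply] at this
    rw [← hv, smul_smul] at this
    exact this
  have hval : ((π s v : D) : H) - ((n : ℂ) * Complex.I) • ((v : D) : H) = (u : H) := by
    have := congrArg (fun w : D => (w : H)) hvald
    push_cast at this
    simpa using this
  have hnorm : ‖(u : H)‖ ^ 2 = ‖((π s v : D) : H)‖ ^ 2 + n ^ 2 * ‖((v : D) : H)‖ ^ 2 := by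
    rw [← TT_norm_sq_sub_smul π hπ hs n v, hval]
  have hle : (n ^ 2) * ‖((v : D) : H)‖ ^ 2 ≤ ‖(u : H)‖ ^ 2 := by
    nlinarith [sq_nonneg ‖((π s v : D) : H)‖]
  have h1 : (|n| * ‖((v : D) : H)‖) ^ 2 ≤ ‖(u : H)‖ ^ 2 := by
    rw [mul_pow, sq_abs]; exact hle
  have h2 : |n| * ‖((v : D) : H)‖ ≤ ‖(u : H)‖ := by
    have := abs_le_abs (a := |n| * ‖((v : D) : H)‖) (b := ‖(u : H)‖)
    nlinarith [norm_nonneg (u : H), norm_nonneg ((v : D) : H), abs_nonneg n]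
  have hpos : (0:ℝ) < |n| := abs_pos.2 hn
  calc ‖((v : D) : H)‖ = |n|⁻¹ * (|n| * ‖((v : D) : H)‖) := by field_simp
    _ ≤ |n|⁻¹ * ‖(u : H)‖ := mul_le_mul_of_nonneg_left h2 (by positivity)

end ExistsResolvent

omit hD hπ in
lemma graph_unique {f : H →ₗ.[ℂ] H} {x y y' : H}
    (h : (x, y) ∈ f.graph) (h' : (x, y') ∈ f.graph) : y = y' := by
  have hx := graph_fst h
  rw [← graph_apply h hx, ← graph_apply h' hx]

section SelfAdjoint

include hπ

lemma TT_graph_inner_eq {s : A} (hs : star s = s) {x y : H}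
    (hxy : (x, y) ∈ (TT π s).closure.graph) (v : D) :
    ⟪y, (v : H)⟫_ℂ = ⟪x, ((π s v : D) : H)⟫_ℂ := by
  obtain ⟨u, hu1, hu2⟩ := (mem_TT_closure_graph π hD hπ).1 hxy
  have key : ∀ n, ⟪((π s (u n) : D) : H), (v : H)⟫_ℂ
      = ⟪((u n : D) : H), ((π s v : D) : H)⟫_ℂ := fun n => TT_symm π hπ hs (u n) v
  have h1 : Tendsto (fun n => ⟪((π s (u n) : D) : H), (v : H)⟫_ℂ) atTop (𝓝 ⟪y, (v : H)⟫_ℂ) :=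
    ((continuous_id.inner continuous_const).tendsto y).comp hu2
  have h2 : Tendsto (fun n => ⟪((u n : D) : H), ((π s v : D) : H)⟫_ℂ) atTop
      (𝓝 ⟪x, ((π s v : D) : H)⟫_ℂ) :=
    ((continuous_id.inner continuous_const).tendsto x).comp hu1
  rw [funext key] at h1
  exact tendsto_nhds_unique h1 h2

lemma TT_closure_graph_symm {s : A} (hs : star s = s) {x y x' y' : H}
    (h : (x, y) ∈ (TT π s).closure.graph) (h' : (x', y') ∈ (TT π s).closure.graph) :
    ⟪y, x'⟫_ℂ = ⟪x, y'⟫_ℂ := by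
  obtain ⟨u, hu1, hu2⟩ := (mem_TT_closure_graph π hD hπ).1 h'
  have key : ∀ n, ⟪y, ((u n : D) : H)⟫_ℂ = ⟪x, ((π s (u n) : D) : H)⟫_ℂ :=
    fun n => TT_graph_inner_eq π hD hπ hs h (u n)
  have h1 : Tendsto (fun n => ⟪y, ((u n : D) : H)⟫_ℂ) atTop (𝓝 ⟪y, x'⟫_ℂ) :=
    ((continuous_const.inner continuous_id).tendsto x').comp hu1
  have h2 : Tendsto (fun n => ⟪x, ((π s (u n) : D) : H)⟫_ℂ) atTop (𝓝 ⟪x, y'⟫_ℂ) :=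
    ((continuous_const.inner continuous_id).tendsto y').comp hu2
  rw [funext key] at h1
  exact tendsto_nhds_unique h1 h2

/-- The main criterion: the closure of `TT π s` is self-adjoint for selfadjoint `s`. -/
lemma TT_closure_isSelfAdjoint (hHerm : ∀ a : A, star a = a → ∀ z ∈ spectrum ℂ a, z.im = 0)
    {s : A} (hs : star s = s) : IsSelfAdjoint (TT π s).closure := by
  rw [LinearPMap.isSelfAdjoint_def]
  have hdense : Dense ((TT π s).closure.domain : Set H) := TT_closure_dense_domain π hD s
  have hsymm : (TT π s).closure.IsFormalAdjoint (TT π s).closure := fun p q =>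
    TT_closure_graph_symm π hD hπ hs (LinearPMap.mem_graph _ p) (LinearPMap.mem_graph _ q)
  have hle : (TT π s).closure ≤ (TT π s).closure.adjoint :=
    LinearPMap.IsFormalAdjoint.le_adjoint hdense hsymm
  obtain ⟨rp, hrp, hbp⟩ := exists_resolvent π hD hπ hHerm hs (n := 1) one_ne_zero
  obtain ⟨rm, hrm, hbm⟩ := exists_resolvent π hD hπ hHerm hs (n := -1) (by norm_num)
  have hadj := LinearPMap.adjoint_isFormalAdjoint hdense
  have key : ∀ (p : (TT π s).closure.adjoint.domain),
      ((p : H), (TT π s).closure.adjoint p) ∈ (TT π s).closure.graph := by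
    intro p
    set y : H := (p : H) with hy
    set z : H := (TT π s).closure.adjoint p with hz
    set w : H := z + Complex.I • y with hw
    have hxw := Rmap_mem_closure_graph π hD hπ hbm hrm w
    set x : H := Rmap π hD hbm w with hx
    have hmuval : w + (((-1 : ℝ) : ℂ) * Complex.I) • x = w - Complex.I • x := by
      push_cast
      rw [sub_eq_add_neg, ← neg_smul]
      ring_nf
    rw [hmuval] at hxw
    have hxy : x = y := by
      rw [← sub_eq_zero, ← inner_self_eq_zero (𝕜 := ℂ)]
      have horto : ∀ q : H, ⟪x - y, q⟫_ℂ = 0 := by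
        intro q
        have hpq := Rmap_mem_closure_graph π hD hπ hbp hrp q
        set pp : H := Rmap π hD hbp q with hpp
        have hmuval2 : q + (((1 : ℝ) : ℂ) * Complex.I) • pp = q + Complex.I • pp := by
          push_cast; ring_nf
        rw [hmuval2] at hpq
        set yp : H := q + Complex.I • pp with hyp
        have hppdom : pp ∈ (TT π s).closure.domain := graph_fst hpq
        have hppval : (TT π s).closure ⟨pp, hppdom⟩ = yp := graph_apply hpq hppdom
        have h1 : ⟪w - Complex.I • x, pp⟫_ℂ = ⟪x, yp⟫_ℂ :=
          TT_closure_graph_symm π hD hπ hs hxw hpq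
        have h2 : ⟪z, pp⟫_ℂ = ⟪y, yp⟫_ℂ := by
          have := hadj p ⟨pp, hppdom⟩
          rw [hppval] at this
          exact this
        have hq : q = yp - Complex.I • pp := by rw [hyp]; abel
        rw [hq]
        rw [inner_sub_left, inner_sub_right, inner_sub_right, inner_smul_right,
          inner_smul_right]
        rw [← h1]
        rw [inner_sub_left, inner_smul_left, hw, inner_add_left, inner_smul_left] at *
        rw [h2] at *
        simp only [Complex.conj_I]
        ring_nf
      exact horto (x - y)
    rw [hxy] at hxw
    have hval : w - Complex.I • y = z := by rw [hw]; abel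
    rwa [hval] at hxw
  refine le_antisymm (LinearPMap.le_of_le_graph fun g hg => ?_) hle
  rcases (LinearPMap.mem_graph_iff _).1 hg with ⟨p, hp1, hp2⟩
  have h1 := key p
  rw [hp2] at h1
  have : g = ((p : H), g.2) := Prod.ext hp1.symm rfl
  rwa [← this] at h1

end SelfAdjoint

section Decomp

variable {a b c : A} (hsa : star a = a) (hsb : star b = b) (hc : c = a + Complex.I • b)

omit hD hπ in
include hc in
lemma pic_apply (u : D) :
    ((π c u : D) : H) = ((π a u : D) : H) + Complex.I • ((π b u : D) : H) := by
  rw [hc, map_add, map_smul]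
  simp

include hπ hc hsa hsb

omit hD in
lemma norm_pic_sq (u : D) :
    ‖((π c u : D) : H)‖ ^ 2 = ‖((π a u : D) : H)‖ ^ 2 + ‖((π b u : D) : H)‖ ^ 2 := by
  rw [pic_apply π hc u, @norm_add_sq ℂ]
  have hinner : ⟪((π a u : D) : H), ((π b u : D) : H)⟫_ℂ
      = ⟪(u : H), ((π a (π b u) : D) : H)⟫_ℂ := by
    have := hπ a u (π b u)
    rwa [hsa] at this
  have hmul : π a (π b u) = π (a * b) u := by rw [map_mul]; rfl
  have him : (⟪(u : H), ((π a (π b u) : D) : H)⟫_ℂ).im = 0 := by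
    have hs : star (a * b) = a * b := by
      rw [star_mul, hsa, hsb, mul_comm]
    have h0 := TT_inner_self_real π hπ hs u
    have h1 : ⟪(u : H), ((π (a * b) u : D) : H)⟫_ℂ
        = (starRingEnd ℂ) ⟪((π (a * b) u : D) : H), (u : H)⟫_ℂ := by rw [inner_conj_symm]
    rw [hmul, h1, Complex.conj_im, h0, neg_zero]
  have hre : RCLike.re ⟪((π a u : D) : H), Complex.I • ((π b u : D) : H)⟫_ℂ = 0 := by
    rw [inner_smul_right, hinner]
    simp [Complex.mul_re, him]
  rw [hre, norm_smul]
  simp [mul_pow]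

/-- Half of the decomposition: the closure of `T_c` is contained in `T̄_a + i T̄_b`. -/
lemma Tc_graph_decomp {x y : H} (hxy : (x, y) ∈ (TT π c).closure.graph) :
    ∃ ya yb : H, (x, ya) ∈ (TT π a).closure.graph ∧ (x, yb) ∈ (TT π b).closure.graph ∧
      y = ya + Complex.I • yb := by
  obtain ⟨u, hu1, hu2⟩ := (mem_TT_closure_graph π hD hπ).1 hxy
  -- the sequences `π a (u n)` and `π b (u n)` are Cauchy
  have hcauchy : CauchySeq (fun n => ((π c (u n) : D) : H)) := hu2.cauchySeq
  have hnormle : ∀ (s' : A) (hs' : s' = a ∨ s' = b) (m n : ℕ),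
      ‖((π s' (u m) : D) : H) - ((π s' (u n) : D) : H)‖
        ≤ ‖((π c (u m) : D) : H) - ((π c (u n) : D) : H)‖ := by
    intro s' hs' m n
    have hdiff : ∀ (t : A), ((π t (u m) : D) : H) - ((π t (u n) : D) : H)
        = ((π t (u m - u n) : D) : H) := by
      intro t
      rw [map_sub]
      push_cast
      ring_nf
    rw [hdiff, hdiff]
    have hident := norm_pic_sq π hπ hsa hsb hc (u m - u n)
    have h2 : ‖((π s' (u m - u n) : D) : H)‖ ^ 2 ≤ ‖((π c (u m - u n) : D) : H)‖ ^ 2 := by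
      rcases hs' with rfl | rfl
      · nlinarith [sq_nonneg ‖((π b (u m - u n) : D) : H)‖]
      · nlinarith [sq_nonneg ‖((π a (u m - u n) : D) : H)‖]
    nlinarith [norm_nonneg ((π s' (u m - u n) : D) : H), norm_nonneg ((π c (u m - u n) : D) : H)]
  have hCa : ∀ (s' : A), (s' = a ∨ s' = b) → CauchySeq (fun n => ((π s' (u n) : D) : H)) := by
    intro s' hs'
    rw [Metric.cauchySeq_iff] at hcauchy ⊢
    intro ε hε
    obtain ⟨N, hN⟩ := hcauchy ε hε
    refine ⟨N, fun m hm n hn => ?_⟩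
    have := hN m hm n hn
    rw [dist_eq_norm] at *
    exact lt_of_le_of_lt (hnormle s' hs' m n) this
  obtain ⟨ya, hya⟩ := cauchySeq_tendsto_of_complete (hCa a (Or.inl rfl))
  obtain ⟨yb, hyb⟩ := cauchySeq_tendsto_of_complete (hCa b (Or.inr rfl))
  refine ⟨ya, yb, (mem_TT_closure_graph π hD hπ).2 ⟨u, hu1, hya⟩,
    (mem_TT_closure_graph π hD hπ).2 ⟨u, hu1, hyb⟩, ?_⟩
  have hlim : Tendsto (fun n => ((π c (u n) : D) : H)) atTop (𝓝 (ya + Complex.I • yb)) := by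
    have : (fun n => ((π c (u n) : D) : H))
        = fun n => ((π a (u n) : D) : H) + Complex.I • ((π b (u n) : D) : H) :=
      funext fun n => pic_apply π hc (u n)
    rw [this]
    exact hya.add (hyb.const_smul _)
  exact tendsto_nhds_unique hu2 hlim

end Decomp

section Mollifier

include hπ

/-- Quantitative mollifier bound. -/
lemma mollifier_bound {s r : A} {ν : ℝ}
    (hbd : ∀ u : D, ‖((π r u : D) : H)‖ ≤ |ν|⁻¹ * ‖(u : H)‖)
    (hinv : (s - algebraMap ℂ A ((ν : ℂ) * Complex.I)) * r = 1)
    (hν : 0 < ν) (w : H) (v : D) :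
    ‖(-((ν : ℂ) * Complex.I)) • Rmap π hD hbd w - w‖
      ≤ 2 * ‖w - (v : H)‖ + ν⁻¹ * ‖((π s v : D) : H)‖ := by
  set μ : ℂ := (ν : ℂ) * Complex.I with hμ
  set R := Rmap π hD hbd with hR
  have habs : ‖μ‖ = ν := by
    rw [hμ]
    simp [abs_of_pos hν]
  have hRle : ∀ q : H, ‖R q‖ ≤ |ν|⁻¹ * ‖q‖ := fun q => Rmap_norm_le π hD hbd q
  have hleft := Rmap_left_inv π hD hπ hbd hinv (TT_mem_closure_graph_of_D π hD hπ (s := s) v)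
  have h2 : R ((π s v : D) : H) - μ • R (v : H) = (v : H) := by
    conv_rhs => rw [← hleft]
    rw [map_sub, map_smul]
  have hdecomp : (-μ) • R w - w
      = (-μ) • R (w - (v : H)) + ((-μ) • R (v : H) - (v : H)) + ((v : H) - w) := by
    rw [map_sub]
    module
  have hterm2 : (-μ) • R (v : H) - (v : H) = -R ((π s v : D) : H) := by
    have h2' : R ((π s v : D) : H) = (v : H) + μ • R (v : H) := sub_eq_iff_eq_add.mp h2
    rw [h2']
    module
  rw [hdecomp, hterm2]
  have hb1 : ‖(-μ) • R (w - (v : H))‖ ≤ ‖w - (v : H)‖ := by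
    rw [norm_smul, norm_neg, habs]
    calc ν * ‖R (w - (v : H))‖ ≤ ν * (|ν|⁻¹ * ‖w - (v : H)‖) :=
          mul_le_mul_of_nonneg_left (hRle _) hν.le
      _ = ‖w - (v : H)‖ := by
          rw [abs_of_pos hν]; field_simp
  have hb2 : ‖-R ((π s v : D) : H)‖ ≤ ν⁻¹ * ‖((π s v : D) : H)‖ := by
    rw [norm_neg]
    have := hRle ((π s v : D) : H)
    rwa [abs_of_pos hν] at this
  calc ‖(-μ) • R (w - (v : H)) + (-R ((π s v : D) : H)) + ((v : H) - w)‖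
      ≤ ‖(-μ) • R (w - (v : H))‖ + ‖-R ((π s v : D) : H)‖ + ‖(v : H) - w‖ :=
        norm_add₃_le
    _ ≤ ‖w - (v : H)‖ + (ν⁻¹ * ‖((π s v : D) : H)‖) + ‖w - (v : H)‖ := by
        gcongr
        · rw [norm_sub_rev]
    _ = 2 * ‖w - (v : H)‖ + ν⁻¹ * ‖((π s v : D) : H)‖ := by ring

end Mollifier

section Recomp

include hπ

lemma Tc_graph_recomp (hHerm : ∀ a : A, star a = a → ∀ z ∈ spectrum ℂ a, z.im = 0)
    {a b c : A} (hsa : star a = a) (hsb : star b = b) (hc : c = a + Complex.I • b)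
    {x ya yb : H} (hxa : (x, ya) ∈ (TT π a).closure.graph)
    (hxb : (x, yb) ∈ (TT π b).closure.graph) :
    (x, ya + Complex.I • yb) ∈ (TT π c).closure.graph := by
  classical
  obtain ⟨ra, hra, hba⟩ := exists_resolvent π hD hπ hHerm hsa (n := 1) one_ne_zero
  have hres : ∀ k : ℕ, ∃ r : A,
      (b - algebraMap ℂ A ((((k : ℝ) + 1 : ℝ) : ℂ) * Complex.I)) * r = 1 ∧
      ∀ u : D, ‖((π r u : D) : H)‖ ≤ |((k : ℝ) + 1)|⁻¹ * ‖(u : H)‖ :=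
    fun k => exists_resolvent π hD hπ hHerm hsb (n := (k : ℝ) + 1) (by positivity)
  choose rk hrk hbk using hres
  set μa : ℂ := ((1 : ℝ) : ℂ) * Complex.I with hμa
  set Ra := Rmap π hD hba with hRa
  set Rk : ℕ → H →L[ℂ] H := fun k => Rmap π hD (hbk k) with hRk
  set μk : ℕ → ℂ := fun k => (((k : ℝ) + 1 : ℝ) : ℂ) * Complex.I with hμk
  have hraz : Ra (ya - μa • x) = x := Rmap_left_inv π hD hπ hba hra hxa
  set z : H := ya - μa • x with hz
  have hya : ya = z + μa • x := by rw [hz]; module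
  have hybk : ∀ k, Rk k yb = x + μk k • Rk k x := by
    intro k
    have h1 : Rk k (yb - μk k • x) = x := Rmap_left_inv π hD hπ (hbk k) (hrk k) hxb
    have h2 : Rk k yb - μk k • Rk k x = x := by
      conv_rhs => rw [← h1]
      rw [map_sub, map_smul]
    exact sub_eq_iff_eq_add.mp h2
  -- mollifier convergence
  have hmoll : ∀ w : H, Tendsto (fun kk : ℕ => (-(μk kk)) • Rk kk w) atTop (𝓝 w) := by
    intro w
    rw [Metric.tendsto_atTop]
    intro ε hε
    obtain ⟨v0, hv0mem, hv0⟩ := hD.exists_dist_lt w (by positivity : (0:ℝ) < ε/3)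
    set v : D := ⟨v0, hv0mem⟩ with hv
    obtain ⟨N, hN⟩ := exists_nat_gt (3 * ‖((π b v : D) : H)‖ / ε)
    refine ⟨N, fun k hk => ?_⟩
    have hb1 := mollifier_bound π hD hπ (hbk k) (hrk k)
      (by positivity : (0:ℝ) < (k:ℝ)+1) w v
    rw [dist_eq_norm]
    have hwv : ‖w - (v : H)‖ < ε / 3 := by
      rw [← dist_eq_norm]; exact hv0
    have hterm : (((k : ℝ) + 1))⁻¹ * ‖((π b v : D) : H)‖ < ε / 3 := by
      have hkN : (3 * ‖((π b v : D) : H)‖ / ε) < (k : ℝ) + 1 := by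
        calc (3 * ‖((π b v : D) : H)‖ / ε) < (N : ℝ) := hN
          _ ≤ (k : ℝ) := by exact_mod_cast hk
          _ ≤ (k : ℝ) + 1 := by linarith
      rw [inv_mul_lt_iff₀ (by positivity : (0:ℝ) < (k:ℝ)+1)]
      have h5 := mul_lt_mul_of_pos_right hkN (by positivity : (0:ℝ) < ε/3)
      have h6 : 3 * ‖((π b v : D) : H)‖ / ε * (ε / 3) = ‖((π b v : D) : H)‖ := by
        field_simp
      rw [h6] at h5
      calc ‖((π b v : D) : H)‖ < ((k:ℝ)+1) * (ε/3) := h5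
        _ = ((k:ℝ)+1) * (ε/3) := rfl
    calc ‖(-(μk k)) • Rk k w - w‖ ≤ 2 * ‖w - (v : H)‖ + (((k:ℝ)+1))⁻¹ * ‖((π b v : D) : H)‖ :=
          hb1
      _ < 2 * (ε/3) + ε/3 := by gcongr
      _ = ε := by ring
  -- each `Rk k x` is in the domain of the closure of `T_c`
  have hmem : ∀ k, (Rk k x, Rk k ya + Complex.I • (x + μk k • Rk k x))
      ∈ (TT π c).closure.graph := by
    intro k
    obtain ⟨w, hw⟩ := exists_seq_tendsto hD z
    rw [mem_TT_closure_graph π hD hπ]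
    refine ⟨fun j => π ra (π (rk k) (w j)), ?_, ?_⟩
    · have hcont : Tendsto (fun j => Ra (Rk k ((w j : H)))) atTop (𝓝 (Ra (Rk k z))) :=
        ((Ra.continuous.comp (Rk k).continuous).tendsto z).comp hw
      have hcomm : Ra (Rk k z) = Rk k x := by
        rw [Rmap_comm π hD hba (hbk k) z]
        rw [show Ra z = x from hraz]
      rw [hcomm] at hcont
      refine Tendsto.congr ?_ hcont
      intro j
      rw [Rmap_apply, Rmap_apply]
    · -- the values converge to `Rk ya + I (x + μk Rk x)`
      have hval : ∀ j, ((π c (π ra (π (rk k) (w j))) : D) : H)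
          = (((π (rk k) (w j) : D) : H) + μa • ((π ra (π (rk k) (w j)) : D) : H))
            + Complex.I • (((π ra (w j) : D) : H) + μk k • ((π ra (π (rk k) (w j)) : D) : H)) := by
        intro j
        rw [pic_apply π hc]
        congr 1
        · -- a-part
          have hmul : a * (ra * rk k) = rk k + algebraMap ℂ A μa * (ra * rk k) := by
            linear_combination rk k * hra
          have := congrArg (fun t => π t (w j)) hmul
          simp only [map_mul, map_add, AlgHom.commutes, Module.algebraMap_end_apply,
            Module.End.mul_apply, LinearMap.add_apply, LinearMap.smul_apply] at this
          rw [this]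
          push_cast
          ring_nf
        · -- b-part
          have hmul : b * (ra * rk k) = ra + algebraMap ℂ A (μk k) * (ra * rk k) := by
            linear_combination ra * (hrk k)
          have := congrArg (fun t => π t (w j)) hmul
          simp only [map_mul, map_add, AlgHom.commutes, Module.algebraMap_end_apply,
            Module.End.mul_apply, LinearMap.add_apply, LinearMap.smul_apply] at this
          rw [this]
          push_cast
          ring_nf
      have hlim : Tendsto (fun j => (((π (rk k) (w j) : D) : H)
            + μa • ((π ra (π (rk k) (w j)) : D) : H))
            + Complex.I • (((π ra (w j) : D) : H) + μk k • ((π ra (π (rk k) (w j)) : D) : H)))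
          atTop (𝓝 ((Rk k z + μa • Rk k x) + Complex.I • (x + μk k • Rk k x))) := by
        have t1 : Tendsto (fun j => ((π (rk k) (w j) : D) : H)) atTop (𝓝 (Rk k z)) := by
          have := ((Rk k).continuous.tendsto z).comp hw
          refine Tendsto.congr ?_ this
          intro j; rw [Function.comp, Rmap_apply]
        have t2 : Tendsto (fun j => ((π ra (π (rk k) (w j)) : D) : H)) atTop (𝓝 (Rk k x)) := by
          have hcont : Tendsto (fun j => Ra (Rk k ((w j : H)))) atTop (𝓝 (Ra (Rk k z))) :=
            ((Ra.continuous.comp (Rk k).continuous).tendsto z).comp hw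
          have hcomm : Ra (Rk k z) = Rk k x := by
            rw [Rmap_comm π hD hba (hbk k) z]
            rw [show Ra z = x from hraz]
          rw [hcomm] at hcont
          refine Tendsto.congr ?_ hcont
          intro j
          rw [Rmap_apply, Rmap_apply]
        have t3 : Tendsto (fun j => ((π ra (w j) : D) : H)) atTop (𝓝 x) := by
          have := (Ra.continuous.tendsto z).comp hw
          rw [show Ra z = x from hraz] at this
          refine Tendsto.congr ?_ this
          intro j; rw [Function.comp, Rmap_apply]
        exact (t1.add (t2.const_smul μa)).add ((t3.add (t2.const_smul (μk k))).const_smul _)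
      have hyaeq : Rk k z + μa • Rk k x = Rk k ya := by
        rw [hya, map_add, map_smul]
      rw [hyaeq] at hlim
      refine Tendsto.congr ?_ hlim
      intro j
      exact (hval j).symm
  -- scalar multiples stay in the graph
  have hsm : ∀ k, ((-(μk k)) • Rk k x,
      (-(μk k)) • (Rk k ya + Complex.I • (x + μk k • Rk k x))) ∈ (TT π c).closure.graph := by
    intro k
    exact Submodule.smul_mem ((TT π c).closure.graph) (-(μk k)) (hmem k)
  -- pass to the limit
  have hlim1 : Tendsto (fun k => (-(μk k)) • Rk k x) atTop (𝓝 x) := hmoll x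
  have hlim2 : Tendsto (fun k => (-(μk k)) • (Rk k ya + Complex.I • (x + μk k • Rk k x)))
      atTop (𝓝 (ya + Complex.I • yb)) := by
    have heq : ∀ k, (-(μk k)) • (Rk k ya + Complex.I • (x + μk k • Rk k x))
        = (-(μk k)) • Rk k ya + Complex.I • ((-(μk k)) • Rk k yb) := by
      intro k
      rw [← hybk k]
      rw [smul_add]
      congr 1
      rw [smul_comm]
    rw [funext heq]
    exact (hmoll ya).add ((hmoll yb).const_smul _)
  have hclosed : IsClosed (((TT π c).closure.graph : Set (H × H))) := by
    have := (TT_isClosable π hD hπ c).closure_isClosed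
    exact this
  exact hclosed.mem_of_tendsto (hlim1.prodMk_nhds hlim2)
    (Filter.Eventually.of_forall hsm)

end Recomp

end Stmt4Aux

theorem stmt4' {A : Type*} [CommRing A] [Algebra ℂ A] [StarRing A] [StarModule ℂ A]
    (hHerm : ∀ a : A, star a = a → ∀ z ∈ spectrum ℂ a, z.im = 0)
    {H : Type*} [NormedAddCommGroup H] [InnerProductSpace ℂ H] [CompleteSpace H]
    (D : Submodule ℂ H) (hD : Dense (D : Set H))
    (π : A →ₐ[ℂ] (D →ₗ[ℂ] D))
    (hπ : ∀ (d : A) (x y : D),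
      ⟪((π d x : D) : H), (y : H)⟫_ℂ = ⟪(x : H), ((π (star d) y : D) : H)⟫_ℂ)
    (c a b : A)
    (ha : a = ((2 : ℂ)⁻¹) • (c + star c))
    (hb : b = ((2 * Complex.I : ℂ)⁻¹) • (c - star c))
    (Ta Tb Tc : H →ₗ.[ℂ] H)
    (hTa : Ta = ⟨D, D.subtype.comp (π a)⟩)
    (hTb : Tb = ⟨D, D.subtype.comp (π b)⟩)
    (hTc : Tc = ⟨D, D.subtype.comp (π c)⟩) :
    (star a = a ∧ star b = b) ∧
    (Ta.IsClosable ∧ IsSelfAdjoint Ta.closure) ∧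
    (Tb.IsClosable ∧ IsSelfAdjoint Tb.closure) ∧
    Tc.IsClosable ∧
    Tc.closure.domain = Ta.closure.domain ⊓ Tb.closure.domain ∧
    ∀ (x : H) (hxc : x ∈ Tc.closure.domain) (hxa : x ∈ Ta.closure.domain)
      (hxb : x ∈ Tb.closure.domain),
      Tc.closure ⟨x, hxc⟩ = Ta.closure ⟨x, hxa⟩ + Complex.I • Tb.closure ⟨x, hxb⟩ := by
  have hsa : star a = a := by
    rw [ha, star_smul, star_add, star_star]
    have h1 : star ((2 : ℂ)⁻¹) = (2 : ℂ)⁻¹ := by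
      rw [Complex.star_def, map_inv₀]
      norm_num [Complex.conj_ofNat]
    rw [h1, add_comm]
  have hsb : star b = b := by
    rw [hb, star_smul, star_sub, star_star]
    have h1 : star ((2 * Complex.I : ℂ)⁻¹) = -(2 * Complex.I)⁻¹ := by
      rw [Complex.star_def, map_inv₀, map_mul, Complex.conj_I, mul_neg, inv_neg]
      norm_num [Complex.conj_ofNat]
    rw [h1, neg_smul, ← smul_neg, neg_sub]
  have hc : c = a + Complex.I • b := by
    rw [ha, hb, smul_smul]
    have h2 : Complex.I * (2 * Complex.I)⁻¹ = (2 : ℂ)⁻¹ := by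
      rw [mul_inv]
      field_simp
    rw [h2, ← smul_add]
    have h3 : (c + star c) + (c - star c) = (2 : ℂ) • c := by
      rw [two_smul]; abel
    rw [h3, smul_smul]
    norm_num
  subst hTa hTb hTc
  have hTa' : (⟨D, D.subtype.comp (π a)⟩ : H →ₗ.[ℂ] H) = TT π a := rfl
  have hTb' : (⟨D, D.subtype.comp (π b)⟩ : H →ₗ.[ℂ] H) = TT π b := rfl
  have hTc' : (⟨D, D.subtype.comp (π c)⟩ : H →ₗ.[ℂ] H) = TT π c := rfl
  rw [hTa', hTb', hTc']
  refine ⟨⟨hsa, hsb⟩, ⟨TT_isClosable π hD hπ a, TT_closure_isSelfAdjoint π hD hπ hHerm hsa⟩,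
    ⟨TT_isClosable π hD hπ b, TT_closure_isSelfAdjoint π hD hπ hHerm hsb⟩,
    TT_isClosable π hD hπ c, ?_, ?_⟩
  · -- domain equality
    ext x
    simp only [Submodule.mem_inf]
    constructor
    · intro hx
      have hgraph := LinearPMap.mem_graph (TT π c).closure ⟨x, hx⟩
      obtain ⟨ya, yb, hga, hgb, _⟩ := Tc_graph_decomp π hD hπ hsa hsb hc hgraph
      exact ⟨graph_fst hga, graph_fst hgb⟩
    · rintro ⟨hxa, hxb⟩
      have hga := LinearPMap.mem_graph (TT π a).closure ⟨x, hxa⟩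
      have hgb := LinearPMap.mem_graph (TT π b).closure ⟨x, hxb⟩
      exact graph_fst (Tc_graph_recomp π hD hπ hHerm hsa hsb hc hga hgb)
  · intro x hxc hxa hxb
    have hga := LinearPMap.mem_graph (TT π a).closure ⟨x, hxa⟩
    have hgb := LinearPMap.mem_graph (TT π b).closure ⟨x, hxb⟩
    exact graph_apply (Tc_graph_recomp π hD hπ hHerm hsa hsb hc hga hgb) hxc


/-- Let `A` be a Hermitian commutative unital complex *-algebra, `π` a
representation of `A` on a dense subspace `D` of a Hilbert space `H`, and `c ∈ A` with real
and imaginary parts `a = (c + star c)/2`, `b = (c - star c)/(2i)`.  Then `T_a` and `T_b` are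
essentially self-adjoint, `T_c` is closable, and
`closure T_c = closure T_a + i • closure T_b`. -/
theorem stmt4 {A : Type*} [CommRing A] [Algebra ℂ A] [StarRing A] [StarModule ℂ A]
    (hHerm : ∀ a : A, star a = a → ∀ z ∈ spectrum ℂ a, z.im = 0)
    {H : Type*} [NormedAddCommGroup H] [InnerProductSpace ℂ H] [CompleteSpace H]
    (D : Submodule ℂ H) (hD : Dense (D : Set H))
    (π : A →ₐ[ℂ] (D →ₗ[ℂ] D))
    (hπ : ∀ (d : A) (x y : D),
      ⟪((π d x : D) : H), (y : H)⟫_ℂ = ⟪(x : H), ((π (star d) y : D) : H)⟫_ℂ)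
    (c a b : A)
    (ha : a = ((2 : ℂ)⁻¹) • (c + star c))
    (hb : b = ((2 * Complex.I : ℂ)⁻¹) • (c - star c))
    (Ta Tb Tc : H →ₗ.[ℂ] H)
    (hTa : Ta = ⟨D, D.subtype.comp (π a)⟩)
    (hTb : Tb = ⟨D, D.subtype.comp (π b)⟩)
    (hTc : Tc = ⟨D, D.subtype.comp (π c)⟩) :
    (star a = a ∧ star b = b) ∧
    (Ta.IsClosable ∧ IsSelfAdjoint Ta.closure) ∧
    (Tb.IsClosable ∧ IsSelfAdjoint Tb.closure) ∧
    Tc.IsClosable ∧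
    Tc.closure.domain = Ta.closure.domain ⊓ Tb.closure.domain ∧
    ∀ (x : H) (hxc : x ∈ Tc.closure.domain) (hxa : x ∈ Ta.closure.domain)
      (hxb : x ∈ Tb.closure.domain),
      Tc.closure ⟨x, hxc⟩ = Ta.closure ⟨x, hxa⟩ + Complex.I • Tb.closure ⟨x, hxb⟩ := by
  exact stmt4' hHerm D hD π hπ c a b ha hb Ta Tb Tc hTa hTb hTc
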